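/- Let X be a set and let N : X × X → ℝ be a symmetric function satisfying N(x,x) = 0 for every x ∈ X. Then N is a negative definite kernel if and only if there exist a real Hilbert space H and a mapping T : X → H such that N(x,y) = ‖T(x) − T(y)‖² for all x, y ∈ X. -/

import Mathlib

/-- A symmetric real-valued function on `X × X` is a negative definite kernel. -/
def IsNegDefKernel {X : Type*} (N : X → X → ℝ) : Prop :=
  (∀ x y, N x y = N y x) ∧
  ∀ (n : ℕ) (x : Fin n → X) (c : Fin n → ℝ), (∑ i, c i) = 0 →
    ∑ i, ∑ j, N (x i) (x j) * c i * c j ≤ 0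

universe u

open Finset UniformSpace

/-- The bilinear form on finitely supported functions induced by a kernel `K`. -/
noncomputable def kerB {X : Type*} (K : X → X → ℝ) : (X →₀ ℝ) →ₗ[ℝ] (X →₀ ℝ) →ₗ[ℝ] ℝ :=
  Finsupp.lsum ℝ fun x => (LinearMap.id : ℝ →ₗ[ℝ] ℝ).smulRight
    (Finsupp.lsum ℝ fun y => (LinearMap.id : ℝ →ₗ[ℝ] ℝ).smulRight (K x y))

theorem kerB_single {X : Type*} (K : X → X → ℝ) (x y : X) (a b : ℝ) :
    kerB K (Finsupp.single x a) (Finsupp.single y b) = K x y * a * b := by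
  simp [kerB, Finsupp.lsum_single, smul_eq_mul]
  ring

theorem kerB_apply {X : Type*} (K : X → X → ℝ) (f g : X →₀ ℝ) :
    kerB K f g = ∑ x ∈ f.support, ∑ y ∈ g.support, K x y * f x * g y := by
  rw [kerB, Finsupp.lsum_apply, Finsupp.sum, LinearMap.sum_apply]
  refine Finset.sum_congr rfl fun x _ => ?_
  rw [LinearMap.smulRight_apply, LinearMap.id_apply, LinearMap.smul_apply, smul_eq_mul,
    Finsupp.lsum_apply, Finsupp.sum, Finset.mul_sum]
  refine Finset.sum_congr rfl fun y _ => ?_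
  rw [LinearMap.smulRight_apply, LinearMap.id_apply, smul_eq_mul]
  ring

theorem kerB_symm {X : Type*} (K : X → X → ℝ) (hKsym : ∀ x y, K x y = K y x) (f g : X →₀ ℝ) :
    kerB K f g = kerB K g f := by
  rw [kerB_apply, kerB_apply, Finset.sum_comm]
  exact Finset.sum_congr rfl fun y _ => Finset.sum_congr rfl fun x _ => by
    rw [hKsym]; ring

/-- Any symmetric kernel with positive semidefinite associated bilinear form admits an
embedding into a real Hilbert space realizing the associated squared distance. -/
theorem exists_hilbert_embedding {X : Type u} (K : X → X → ℝ)
    (hKsym : ∀ x y, K x y = K y x)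
    (hpsd : ∀ f : X →₀ ℝ, 0 ≤ kerB K f f) :
    ∃ (H : Type u) (_ : NormedAddCommGroup H) (_ : InnerProductSpace ℝ H)
      (_ : CompleteSpace H) (T : X → H),
      ∀ x y, ‖T x - T y‖ ^ 2 = K x x + K y y - 2 * K x y := by
  classical
  letI c : PreInnerProductSpace.Core ℝ (X →₀ ℝ) :=
    { inner := fun f g => kerB K f g
      conj_inner_symm := fun f g => by simpa using kerB_symm K hKsym g f
      re_inner_nonneg := fun f => by simpa using hpsd f
      add_left := fun f g h => by simp
      smul_left := fun f g r => by simp }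
  letI : SeminormedAddCommGroup (X →₀ ℝ) :=
    InnerProductSpace.Core.toSeminormedAddCommGroup (𝕜 := ℝ)
  letI : NormedSpace ℝ (X →₀ ℝ) := InnerProductSpace.Core.toNormedSpace (𝕜 := ℝ)
  letI : InnerProductSpace ℝ (X →₀ ℝ) :=
    { inner := fun f g => kerB K f g
      norm_sq_eq_re_inner := fun f => by
        have h0 : (0:ℝ) ≤ kerB K f f := hpsd f
        exact Real.sq_sqrt h0
      conj_inner_symm := fun f g => by exact c.conj_inner_symm f g
      add_left := fun f g h => by exact c.add_left f g h
      smul_left := fun f g r => by exact c.smul_left f g r }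
  refine ⟨Completion (X →₀ ℝ), inferInstance, inferInstance, inferInstance,
    fun x => ((Finsupp.single x 1 : X →₀ ℝ) : Completion (X →₀ ℝ)), fun x y => ?_⟩
  rw [← Completion.coe_sub, Completion.norm_coe]
  have h1 : ‖(Finsupp.single x 1 - Finsupp.single y 1 : X →₀ ℝ)‖ ^ 2
      = kerB K (Finsupp.single x 1 - Finsupp.single y 1)
          (Finsupp.single x 1 - Finsupp.single y 1) := by
    rw [← real_inner_self_eq_norm_sq]
    rfl
  rw [h1]
  simp only [map_sub, LinearMap.sub_apply, kerB_single]
  rw [hKsym y x]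
  ring

/-- The kernel associated to a negative definite kernel is positive semidefinite. -/
theorem kfin_psd {X : Type*} (N : X → X → ℝ) (hsym : ∀ x y, N x y = N y x)
    (hdiag : ∀ x, N x x = 0)
    (hN : ∀ (n : ℕ) (x : Fin n → X) (c : Fin n → ℝ), (∑ i, c i) = 0 →
      ∑ i, ∑ j, N (x i) (x j) * c i * c j ≤ 0)
    (x₀ : X) (n : ℕ) (z : Fin n → X) (c : Fin n → ℝ) :
    0 ≤ ∑ i, ∑ j, ((N (z i) x₀ + N (z j) x₀ - N (z i) (z j)) / 2) * c i * c j := by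
  set S := ∑ i, c i with hS
  set P := ∑ i, N (z i) x₀ * c i with hP
  set Q := ∑ i, ∑ j, N (z i) (z j) * c i * c j with hQ
  have happ := hN (n+1) (Fin.cons x₀ z) (Fin.cons (-S) c)
    (by rw [Fin.sum_cons]; simp [hS])
  have hexp : ∑ i : Fin (n+1), ∑ j : Fin (n+1),
      N ((Fin.cons x₀ z : Fin (n+1) → X) i) ((Fin.cons x₀ z : Fin (n+1) → X) j)
        * (Fin.cons (-S) c : Fin (n+1) → ℝ) i * (Fin.cons (-S) c : Fin (n+1) → ℝ) j
      = -S * P + (-S * P + Q) := by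
    simp only [Fin.sum_univ_succ, Fin.cons_zero, Fin.cons_succ]
    rw [hdiag x₀]
    have e1 : ∑ j : Fin n, N x₀ (z j) * -S * c j = -S * P := by
      rw [hP, Finset.mul_sum]
      exact Finset.sum_congr rfl fun j _ => by rw [hsym x₀ (z j)]; ring
    have e2 : ∑ i : Fin n, (N (z i) x₀ * c i * -S
        + ∑ j : Fin n, N (z i) (z j) * c i * c j) = -S * P + Q := by
      rw [Finset.sum_add_distrib, hQ, hP, Finset.mul_sum]
      congr 1
      exact Finset.sum_congr rfl fun i _ => by ring
    rw [e1, e2]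
    ring
  rw [hexp] at happ
  have hA : ∑ i, ∑ j, N (z i) x₀ * c i * c j = P * S := by
    rw [hP, hS, Finset.sum_mul_sum]
  have hB : ∑ i, ∑ j, N (z j) x₀ * c i * c j = S * P := by
    rw [hP, hS, Finset.sum_mul_sum]
    exact Finset.sum_congr rfl fun i _ => Finset.sum_congr rfl fun j _ => by ring
  have step1 : ∑ i, ∑ j, ((N (z i) x₀ + N (z j) x₀ - N (z i) (z j)) / 2) * c i * c j
      = (∑ i, ∑ j, (N (z i) x₀ * c i * c j + N (z j) x₀ * c i * c j
          - N (z i) (z j) * c i * c j)) / 2 := by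
    rw [Finset.sum_div]
    refine Finset.sum_congr rfl fun i _ => ?_
    rw [Finset.sum_div]
    exact Finset.sum_congr rfl fun j _ => by ring
  have step2 : ∑ i, ∑ j, (N (z i) x₀ * c i * c j + N (z j) x₀ * c i * c j
      - N (z i) (z j) * c i * c j) = P * S + S * P - Q := by
    simp only [Finset.sum_add_distrib, Finset.sum_sub_distrib]
    rw [hA, hB, ← hQ]
  rw [step1, step2]
  linarith

/-- Reindexing a nonnegativity statement from tuples to finitely supported functions. -/
theorem hpsd_of_fin {X : Type*} (K : X → X → ℝ)
    (hfin : ∀ (n : ℕ) (z : Fin n → X) (c : Fin n → ℝ),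
      0 ≤ ∑ i, ∑ j, K (z i) (z j) * c i * c j)
    (f : X →₀ ℝ) :
    0 ≤ ∑ x ∈ f.support, ∑ y ∈ f.support, K x y * f x * f y := by
  classical
  set s := f.support with hs
  have h1 : ∀ G : X → ℝ, ∑ x ∈ s, G x = ∑ i : Fin s.card, G (s.equivFin.symm i : X) := by
    intro G
    rw [← Finset.sum_coe_sort s G]
    exact (Equiv.sum_comp s.equivFin.symm fun a => G (a : X)).symm
  have h2 : ∑ x ∈ s, ∑ y ∈ s, K x y * f x * f y
      = ∑ i : Fin s.card, ∑ j : Fin s.card,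
          K (s.equivFin.symm i : X) (s.equivFin.symm j : X)
            * f (s.equivFin.symm i : X) * f (s.equivFin.symm j : X) := by
    rw [h1 fun x => ∑ y ∈ s, K x y * f x * f y]
    exact Finset.sum_congr rfl fun i _ => h1 _
  rw [h2]
  exact hfin s.card (fun i => (s.equivFin.symm i : X)) (fun i => f (s.equivFin.symm i : X))

/-- The easy direction of Schoenberg's theorem. -/
theorem back_dir {X : Type*} {H : Type*} [NormedAddCommGroup H] [InnerProductSpace ℝ H]
    (T : X → H) (n : ℕ) (x : Fin n → X) (c : Fin n → ℝ) (hc : (∑ i, c i) = 0) :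
    ∑ i, ∑ j, ‖T (x i) - T (x j)‖ ^ 2 * c i * c j ≤ 0 := by
  set a : Fin n → H := fun i => T (x i) with ha
  have hA : ∑ i, ∑ j, ‖a i‖ ^ 2 * c i * c j = 0 := by
    rw [← Finset.sum_mul_sum, hc, mul_zero]
  have hC : ∑ i, ∑ j, ‖a j‖ ^ 2 * c i * c j = 0 := by
    have : ∀ i ∈ Finset.univ, ∑ j, ‖a j‖ ^ 2 * c i * c j
        = ∑ j : Fin n, c i * (‖a j‖ ^ 2 * c j) := by
      intro i _; exact Finset.sum_congr rfl fun j _ => by ring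
    rw [Finset.sum_congr rfl this, ← Finset.sum_mul_sum, hc, zero_mul]
  have hB : (inner ℝ (∑ i, c i • a i) (∑ j, c j • a j) : ℝ)
      = ∑ i, ∑ j, (inner ℝ (a i) (a j) : ℝ) * c i * c j := by
    rw [sum_inner]
    refine Finset.sum_congr rfl fun i _ => ?_
    rw [real_inner_smul_left, inner_sum, Finset.mul_sum]
    refine Finset.sum_congr rfl fun j _ => ?_
    rw [real_inner_smul_right]; ring
  have hL : ∑ i, ∑ j, ‖a i - a j‖ ^ 2 * c i * c j
      = ∑ i, ∑ j, (‖a i‖ ^ 2 * c i * c j + ‖a j‖ ^ 2 * c i * c j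
          - 2 * ((inner ℝ (a i) (a j) : ℝ) * c i * c j)) := by
    refine Finset.sum_congr rfl fun i _ => Finset.sum_congr rfl fun j _ => ?_
    rw [norm_sub_sq_real]; ring
  have hsplit : ∑ i, ∑ j, (‖a i‖ ^ 2 * c i * c j + ‖a j‖ ^ 2 * c i * c j
          - 2 * ((inner ℝ (a i) (a j) : ℝ) * c i * c j))
      = (∑ i, ∑ j, ‖a i‖ ^ 2 * c i * c j) + (∑ i, ∑ j, ‖a j‖ ^ 2 * c i * c j)
        - 2 * ∑ i, ∑ j, (inner ℝ (a i) (a j) : ℝ) * c i * c j := by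
    simp only [Finset.sum_add_distrib, Finset.sum_sub_distrib, ← Finset.mul_sum]
  have hpos : (0:ℝ) ≤ inner ℝ (∑ i, c i • a i) (∑ j, c j • a j) := real_inner_self_nonneg
  rw [hL, hsplit, hA, hC, ← hB]
  linarith

/-- Schoenberg: a symmetric function `N : X × X → ℝ` vanishing on the diagonal is a negative
definite kernel if and only if there exist a real Hilbert space `H` and a mapping `T : X → H`
with `N x y = ‖T x - T y‖ ^ 2` for all `x, y`. -/
theorem negDefKernel_iff_dist_sq {X : Type u} (N : X → X → ℝ)
    (hsym : ∀ x y, N x y = N y x) (hdiag : ∀ x, N x x = 0) :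
    IsNegDefKernel N ↔
      ∃ (H : Type u) (_ : NormedAddCommGroup H) (_ : InnerProductSpace ℝ H)
        (_ : CompleteSpace H) (T : X → H),
        ∀ x y, N x y = ‖T x - T y‖ ^ 2 := by
  constructor
  · intro hN
    by_cases hX : Nonempty X
    · obtain ⟨x₀⟩ := hX
      set K : X → X → ℝ := fun a b => (N a x₀ + N b x₀ - N a b) / 2 with hK
      have hKsym : ∀ a b, K a b = K b a := fun a b => by
        simp only [hK]; rw [hsym a b]; ring
      have hpsd : ∀ f : X →₀ ℝ, 0 ≤ kerB K f f := fun f => by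
        rw [kerB_apply]
        exact hpsd_of_fin K
          (fun n z c => kfin_psd N hsym hdiag hN.2 x₀ n z c) f
      obtain ⟨H, i1, i2, i3, T, hT⟩ := exists_hilbert_embedding K hKsym hpsd
      refine ⟨H, i1, i2, i3, T, fun x y => ?_⟩
      rw [hT x y]
      show N x y = (N x x₀ + N x x₀ - N x x) / 2 + (N y x₀ + N y x₀ - N y y) / 2
        - 2 * ((N x x₀ + N y x₀ - N x y) / 2)
      rw [hdiag x, hdiag y]
      ring
    · haveI : IsEmpty X := not_nonempty_iff.mp hX
      obtain ⟨H, i1, i2, i3, T, hT⟩ := exists_hilbert_embedding (X := X) (fun _ _ => (0:ℝ))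
        (fun _ _ => rfl) (fun f => by rw [kerB_apply]; simp)
      exact ⟨H, i1, i2, i3, T, fun x => isEmptyElim x⟩
  · rintro ⟨H, _, _, _, T, hT⟩
    refine ⟨hsym, fun n x c hc => ?_⟩
    have h1 : ∑ i, ∑ j, N (x i) (x j) * c i * c j
        = ∑ i, ∑ j, ‖T (x i) - T (x j)‖ ^ 2 * c i * c j := by
      refine Finset.sum_congr rfl fun i _ => Finset.sum_congr rfl fun j _ => ?_
      rw [hT]
    rw [h1]
    exact back_dir T n x c hc
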